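/- For a bivariate simple max-stable vector (η₁,η₂) with pair extremal coefficient θ, the quantity γ = ∫ P[η₁ ≤ y₁, η₂ ≤ y₂] dμ_{1,2}(y₁,y₂), where μ_{1,2} is the bivariate exponent measure, satisfies γ ≤ 2(2 − θ). -/

import Mathlib

open MeasureTheory Set Filter
open scoped ENNReal Topology

lemma aux1 (a : ℝ) (ha : 0 < a) :
    ∫⁻ r in Set.Ioi a, ENNReal.ofReal ((r ^ 2)⁻¹) ∂volume = ENNReal.ofReal a⁻¹ := by
  have hderiv : ∀ x ∈ Set.Ioi a, HasDerivAt (fun r : ℝ => -r⁻¹) ((x ^ 2)⁻¹) x := by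
    intro x hx
    have hx0 : x ≠ 0 := (ha.trans hx).ne'
    have h := (hasDerivAt_inv hx0).neg
    rw [neg_neg] at h
    exact h
  have hcont : ContinuousWithinAt (fun r : ℝ => -r⁻¹) (Set.Ici a) a :=
    ((continuousAt_inv₀ ha.ne').neg).continuousWithinAt
  have hpos : ∀ x ∈ Set.Ioi a, (0:ℝ) ≤ (x ^ 2)⁻¹ := fun x _ => by positivity
  have htend : Tendsto (fun r : ℝ => -r⁻¹) atTop (𝓝 0) := by
    simpa using (tendsto_inv_atTop_zero (𝕜 := ℝ)).neg
  have hint : IntegrableOn (fun x : ℝ => (x ^ 2)⁻¹) (Set.Ioi a) volume :=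
    integrableOn_Ioi_deriv_of_nonneg hcont hderiv hpos htend
  have heq : ∫ x in Set.Ioi a, (x ^ 2)⁻¹ = a⁻¹ := by
    have := integral_Ioi_of_hasDerivAt_of_nonneg hcont hderiv hpos htend
    simpa using this
  rw [← ofReal_integral_eq_lintegral_ofReal hint (ae_of_all _ fun x => by positivity), heq]

lemma aux2 (m : ℝ) (hm : 0 < m) :
    ∫⁻ r in Set.Ioi (0:ℝ), ENNReal.ofReal (Real.exp (-(r * m)⁻¹) * (r ^ 2)⁻¹) ∂volume
      = ENNReal.ofReal m := by
  set F : ℝ → ℝ := fun r => if r ≤ 0 then 0 else m * Real.exp (-(r * m)⁻¹) with hF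
  have hG : ∀ x : ℝ, 0 < x → HasDerivAt (fun r : ℝ => m * Real.exp (-(r * m)⁻¹))
      (Real.exp (-(x * m)⁻¹) * (x ^ 2)⁻¹) x := by
    intro x hx
    have hxm : x * m ≠ 0 := by positivity
    have h1 : HasDerivAt (fun r : ℝ => r * m) m x := by simpa using (hasDerivAt_id x).mul_const m
    have h2 := (h1.inv hxm).neg
    have h3 := (h2.exp).const_mul m
    refine h3.congr_deriv ?_
    simp only [Pi.neg_apply, Pi.inv_apply]
    field_simp
  have hderiv : ∀ x ∈ Set.Ioi (0:ℝ), HasDerivAt F (Real.exp (-(x * m)⁻¹) * (x ^ 2)⁻¹) x := by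
    intro x hx
    apply (hG x hx).congr_of_eventuallyEq
    filter_upwards [isOpen_Ioi.eventually_mem hx] with r hr
    simp [hF, not_le.mpr (mem_Ioi.mp hr)]
  have hpos : ∀ x ∈ Set.Ioi (0:ℝ), (0:ℝ) ≤ Real.exp (-(x * m)⁻¹) * (x ^ 2)⁻¹ :=
    fun x _ => by positivity
  have hcont : ContinuousWithinAt F (Set.Ici (0:ℝ)) 0 := by
    have hF0 : F 0 = 0 := by simp [hF]
    rw [← continuousWithinAt_Ioi_iff_Ici]
    unfold ContinuousWithinAt
    rw [hF0]
    have t1 : Tendsto (fun r : ℝ => r * m) (𝓝[>] 0) (𝓝[>] 0) := by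
      apply tendsto_nhdsWithin_of_tendsto_nhds_of_eventually_within
      · have h0 : Tendsto (fun r : ℝ => r * m) (𝓝 0) (𝓝 (0 * m)) := tendsto_id.mul_const m
        rw [zero_mul] at h0
        exact h0.mono_left nhdsWithin_le_nhds
      · filter_upwards [self_mem_nhdsWithin] with r hr
        exact mul_pos (mem_Ioi.mp hr) hm
    have t2 : Tendsto (fun r : ℝ => -(r * m)⁻¹) (𝓝[>] 0) atBot :=
      tendsto_neg_atTop_atBot.comp (tendsto_inv_nhdsGT_zero.comp t1)
    have t3 : Tendsto (fun r : ℝ => m * Real.exp (-(r * m)⁻¹)) (𝓝[>] 0) (𝓝 0) := by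
      have := (Real.tendsto_exp_atBot.comp t2).const_mul m
      simpa using this
    apply t3.congr'
    filter_upwards [self_mem_nhdsWithin] with r hr
    simp [hF, not_le.mpr (mem_Ioi.mp hr)]
  have htop : Tendsto F atTop (𝓝 m) := by
    have t1 : Tendsto (fun r : ℝ => r * m) atTop atTop :=
      Tendsto.atTop_mul_const hm tendsto_id
    have t2 : Tendsto (fun r : ℝ => -(r * m)⁻¹) atTop (𝓝 0) := by
      simpa using (tendsto_inv_atTop_zero.comp t1).neg
    have t3 : Tendsto (fun r : ℝ => m * Real.exp (-(r * m)⁻¹)) atTop (𝓝 m) := by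
      have := ((Real.continuous_exp.tendsto 0).comp t2).const_mul m
      simpa using this
    apply t3.congr'
    filter_upwards [eventually_gt_atTop 0] with r hr
    simp [hF, not_le.mpr hr]
  have hint : IntegrableOn (fun x : ℝ => Real.exp (-(x * m)⁻¹) * (x ^ 2)⁻¹) (Set.Ioi 0) volume :=
    integrableOn_Ioi_deriv_of_nonneg hcont hderiv hpos htop
  have heq : ∫ x in Set.Ioi (0:ℝ), Real.exp (-(x * m)⁻¹) * (x ^ 2)⁻¹ = m := by
    have := integral_Ioi_of_hasDerivAt_of_nonneg hcont hderiv hpos htop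
    simpa [hF] using this
  rw [← ofReal_integral_eq_lintegral_ofReal hint (ae_of_all _ fun x => by positivity), heq]

set_option maxHeartbeats 1000000 in
/-- For a bivariate simple max-stable vector with pair extremal coefficient `θ`,
the quantity `γ = ∫ P[η₁ ≤ y₁, η₂ ≤ y₂] dμ_{1,2}(y₁,y₂)` satisfies
`γ ≤ 2(2 − θ)`. -/
theorem stmt16 {Ω : Type*} [MeasurableSpace Ω] (P : Measure Ω) [IsProbabilityMeasure P]
    (σ : Measure (ℝ × ℝ)) [IsProbabilityMeasure σ]
    (hnn : ∀ᵐ w ∂σ, 0 ≤ w.1 ∧ 0 ≤ w.2)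
    (hi1 : Integrable (fun w : ℝ × ℝ => w.1) σ)
    (hi2 : Integrable (fun w : ℝ × ℝ => w.2) σ)
    (h1 : ∫ w, w.1 ∂σ = 1) (h2 : ∫ w, w.2 ∂σ = 1)
    (θ : ℝ) (hθ : θ = ∫ w, max w.1 w.2 ∂σ)
    (μ12 : Measure (ℝ × ℝ))
    (hμ : ∀ A : Set (ℝ × ℝ), MeasurableSet A → μ12 A =
        ∫⁻ w, (∫⁻ r in Set.Ioi (0 : ℝ),
          A.indicator (fun _ => (1 : ℝ≥0∞)) (r * w.1, r * w.2)
            * ENNReal.ofReal (r ^ 2)⁻¹ ∂volume) ∂σ)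
    (η₁ η₂ : Ω → ℝ) (hη₁ : Measurable η₁) (hη₂ : Measurable η₂)
    (hjoint : ∀ y₁ y₂ : ℝ, 0 < y₁ → 0 < y₂ →
      P {ω | η₁ ω ≤ y₁ ∧ η₂ ω ≤ y₂} =
        ENNReal.ofReal (Real.exp (-(μ12 {w | y₁ < w.1 ∨ y₂ < w.2}).toReal))) :
    ∫⁻ y, P {ω | η₁ ω ≤ y.1 ∧ η₂ ω ≤ y.2} ∂μ12 ≤ ENNReal.ofReal (2 * (2 - θ)) := by
  classical
  set g : ℝ × ℝ → ℝ≥0∞ := fun y => P {ω | η₁ ω ≤ y.1 ∧ η₂ ω ≤ y.2} with hgdef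
  -- measurability of g
  have hgmeas : Measurable g := by
    have hs : MeasurableSet {p : (ℝ × ℝ) × Ω | η₁ p.2 ≤ p.1.1 ∧ η₂ p.2 ≤ p.1.2} := by
      apply MeasurableSet.inter
      · exact measurableSet_le (hη₁.comp measurable_snd) (measurable_fst.comp measurable_fst)
      · exact measurableSet_le (hη₂.comp measurable_snd) (measurable_snd.comp measurable_fst)
    exact measurable_measure_prodMk_left hs
  -- first marginal of μ12
  have hμ1 : ∀ y₁ : ℝ, 0 < y₁ → μ12 {u : ℝ × ℝ | y₁ < u.1} = ENNReal.ofReal y₁⁻¹ := by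
    intro y₁ hy₁
    have hAmeas : MeasurableSet {u : ℝ × ℝ | y₁ < u.1} :=
      measurableSet_lt measurable_const measurable_fst
    rw [hμ _ hAmeas]
    have hinner : ∀ w : ℝ × ℝ, 0 ≤ w.1 →
        (∫⁻ r in Set.Ioi (0:ℝ),
          ({u : ℝ × ℝ | y₁ < u.1}).indicator (fun _ => (1:ℝ≥0∞)) (r * w.1, r * w.2)
            * ENNReal.ofReal ((r:ℝ) ^ 2)⁻¹ ∂volume)
          = ENNReal.ofReal w.1 * ENNReal.ofReal y₁⁻¹ := by
      intro w hw
      rcases eq_or_lt_of_le hw with h0 | h0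
      · have hzero : ∀ r : ℝ, ¬ (y₁ < r * w.1) := by
          intro r; rw [← h0, mul_zero]; exact not_lt.mpr hy₁.le
        have hne : ¬ (y₁ < 0) := not_lt.mpr hy₁.le
        simp [Set.indicator_apply, Set.mem_setOf_eq, hzero, ← h0, hne]
      · have hptwise : ∀ r : ℝ,
            ({u : ℝ × ℝ | y₁ < u.1}).indicator (fun _ => (1:ℝ≥0∞)) (r * w.1, r * w.2)
              * ENNReal.ofReal ((r:ℝ) ^ 2)⁻¹
            = (Set.Ioi (y₁ / w.1)).indicator (fun r : ℝ => ENNReal.ofReal ((r ^ 2)⁻¹)) r := by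
          intro r
          have hcond : y₁ < r * w.1 ↔ y₁ / w.1 < r := (div_lt_iff₀ h0).symm
          simp only [Set.indicator_apply, Set.mem_setOf_eq, Set.mem_Ioi]
          by_cases hr : y₁ / w.1 < r
          · rw [if_pos (hcond.mpr hr), if_pos hr, one_mul]
          · rw [if_neg (fun h => hr (hcond.mp h)), if_neg hr, zero_mul]
        rw [lintegral_congr hptwise, lintegral_indicator measurableSet_Ioi,
          Measure.restrict_restrict measurableSet_Ioi,
          Set.inter_eq_left.mpr (fun r (hr : r ∈ Set.Ioi (y₁ / w.1)) =>
            mem_Ioi.mpr ((div_pos hy₁ h0).trans (mem_Ioi.mp hr))),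
          aux1 _ (div_pos hy₁ h0), ← ENNReal.ofReal_mul hw]
        congr 1
        rw [inv_div]
        field_simp
    calc ∫⁻ w, (∫⁻ r in Set.Ioi (0:ℝ),
          ({u : ℝ × ℝ | y₁ < u.1}).indicator (fun _ => (1:ℝ≥0∞)) (r * w.1, r * w.2)
            * ENNReal.ofReal ((r:ℝ) ^ 2)⁻¹ ∂volume) ∂σ
        = ∫⁻ w, ENNReal.ofReal w.1 * ENNReal.ofReal y₁⁻¹ ∂σ :=
          lintegral_congr_ae (hnn.mono fun w hw => hinner w hw.1)
      _ = (∫⁻ w, ENNReal.ofReal w.1 ∂σ) * ENNReal.ofReal y₁⁻¹ :=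
          lintegral_mul_const _ (ENNReal.measurable_ofReal.comp measurable_fst)
      _ = ENNReal.ofReal y₁⁻¹ := by
          rw [← ofReal_integral_eq_lintegral_ofReal hi1 (hnn.mono fun w hw => hw.1), h1]
          simp
  have hμ2 : ∀ y₂ : ℝ, 0 < y₂ → μ12 {u : ℝ × ℝ | y₂ < u.2} = ENNReal.ofReal y₂⁻¹ := by
    intro y₂ hy₂
    have hAmeas : MeasurableSet {u : ℝ × ℝ | y₂ < u.2} :=
      measurableSet_lt measurable_const measurable_snd
    rw [hμ _ hAmeas]
    have hinner : ∀ w : ℝ × ℝ, 0 ≤ w.2 →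
        (∫⁻ r in Set.Ioi (0:ℝ),
          ({u : ℝ × ℝ | y₂ < u.2}).indicator (fun _ => (1:ℝ≥0∞)) (r * w.1, r * w.2)
            * ENNReal.ofReal ((r:ℝ) ^ 2)⁻¹ ∂volume)
          = ENNReal.ofReal w.2 * ENNReal.ofReal y₂⁻¹ := by
      intro w hw
      rcases eq_or_lt_of_le hw with h0 | h0
      · have hzero : ∀ r : ℝ, ¬ (y₂ < r * w.2) := by
          intro r; rw [← h0, mul_zero]; exact not_lt.mpr hy₂.le
        have hne : ¬ (y₂ < 0) := not_lt.mpr hy₂.le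
        simp [Set.indicator_apply, Set.mem_setOf_eq, hzero, ← h0, hne]
      · have hptwise : ∀ r : ℝ,
            ({u : ℝ × ℝ | y₂ < u.2}).indicator (fun _ => (1:ℝ≥0∞)) (r * w.1, r * w.2)
              * ENNReal.ofReal ((r:ℝ) ^ 2)⁻¹
            = (Set.Ioi (y₂ / w.2)).indicator (fun r : ℝ => ENNReal.ofReal ((r ^ 2)⁻¹)) r := by
          intro r
          have hcond : y₂ < r * w.2 ↔ y₂ / w.2 < r := (div_lt_iff₀ h0).symm
          simp only [Set.indicator_apply, Set.mem_setOf_eq, Set.mem_Ioi]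
          by_cases hr : y₂ / w.2 < r
          · rw [if_pos (hcond.mpr hr), if_pos hr, one_mul]
          · rw [if_neg (fun h => hr (hcond.mp h)), if_neg hr, zero_mul]
        rw [lintegral_congr hptwise, lintegral_indicator measurableSet_Ioi,
          Measure.restrict_restrict measurableSet_Ioi,
          Set.inter_eq_left.mpr (fun r (hr : r ∈ Set.Ioi (y₂ / w.2)) =>
            mem_Ioi.mpr ((div_pos hy₂ h0).trans (mem_Ioi.mp hr))),
          aux1 _ (div_pos hy₂ h0), ← ENNReal.ofReal_mul hw]
        congr 1
        rw [inv_div]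
        field_simp
    calc ∫⁻ w, (∫⁻ r in Set.Ioi (0:ℝ),
          ({u : ℝ × ℝ | y₂ < u.2}).indicator (fun _ => (1:ℝ≥0∞)) (r * w.1, r * w.2)
            * ENNReal.ofReal ((r:ℝ) ^ 2)⁻¹ ∂volume) ∂σ
        = ∫⁻ w, ENNReal.ofReal w.2 * ENNReal.ofReal y₂⁻¹ ∂σ :=
          lintegral_congr_ae (hnn.mono fun w hw => hinner w hw.2)
      _ = (∫⁻ w, ENNReal.ofReal w.2 ∂σ) * ENNReal.ofReal y₂⁻¹ :=
          lintegral_mul_const _ (ENNReal.measurable_ofReal.comp measurable_snd)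
      _ = ENNReal.ofReal y₂⁻¹ := by
          rw [← ofReal_integral_eq_lintegral_ofReal hi2 (hnn.mono fun w hw => hw.2), h2]
          simp
  -- the exceedance set has finite measure and we get the exponential bound
  have hexp : ∀ y₁ y₂ : ℝ, 0 < y₁ → 0 < y₂ →
      g (y₁, y₂) ≤ ENNReal.ofReal (Real.exp (-(min y₁ y₂)⁻¹)) := by
    intro y₁ y₂ hy₁ hy₂
    have hsetU : {w : ℝ × ℝ | y₁ < w.1 ∨ y₂ < w.2}
        = {u : ℝ × ℝ | y₁ < u.1} ∪ {u : ℝ × ℝ | y₂ < u.2} := rfl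
    have hfin : μ12 {w : ℝ × ℝ | y₁ < w.1 ∨ y₂ < w.2} ≠ ⊤ := by
      rw [hsetU]
      refine ne_top_of_le_ne_top ?_ (measure_union_le _ _)
      rw [hμ1 _ hy₁, hμ2 _ hy₂]
      exact ENNReal.add_ne_top.mpr ⟨ENNReal.ofReal_ne_top, ENNReal.ofReal_ne_top⟩
    have hb1 : y₁⁻¹ ≤ (μ12 {w : ℝ × ℝ | y₁ < w.1 ∨ y₂ < w.2}).toReal := by
      have hle : μ12 {u : ℝ × ℝ | y₁ < u.1} ≤ μ12 {w : ℝ × ℝ | y₁ < w.1 ∨ y₂ < w.2} :=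
        measure_mono fun u hu => Or.inl hu
      have := ENNReal.toReal_mono hfin hle
      rwa [hμ1 _ hy₁, ENNReal.toReal_ofReal (inv_nonneg.mpr hy₁.le)] at this
    have hb2 : y₂⁻¹ ≤ (μ12 {w : ℝ × ℝ | y₁ < w.1 ∨ y₂ < w.2}).toReal := by
      have hle : μ12 {u : ℝ × ℝ | y₂ < u.2} ≤ μ12 {w : ℝ × ℝ | y₁ < w.1 ∨ y₂ < w.2} :=
        measure_mono fun u hu => Or.inr hu
      have := ENNReal.toReal_mono hfin hle
      rwa [hμ2 _ hy₂, ENNReal.toReal_ofReal (inv_nonneg.mpr hy₂.le)] at this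
    have hmin : (min y₁ y₂)⁻¹ ≤ (μ12 {w : ℝ × ℝ | y₁ < w.1 ∨ y₂ < w.2}).toReal := by
      rcases min_choice y₁ y₂ with h | h <;> rw [h]
      · exact hb1
      · exact hb2
    rw [hgdef]
    simp only
    rw [hjoint _ _ hy₁ hy₂]
    exact ENNReal.ofReal_le_ofReal (Real.exp_le_exp.mpr (neg_le_neg hmin))
  -- monotonicity of g
  have hmono : ∀ {y₁ y₂ z₁ z₂ : ℝ}, y₁ ≤ z₁ → y₂ ≤ z₂ → g (y₁, y₂) ≤ g (z₁, z₂) := by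
    intro y₁ y₂ z₁ z₂ ha hb
    exact measure_mono fun ω hω => ⟨hω.1.trans ha, hω.2.trans hb⟩
  -- g vanishes when a coordinate is nonpositive
  have hzero : ∀ y₁ y₂ : ℝ, (y₁ ≤ 0 ∨ y₂ ≤ 0) → g (y₁, y₂) = 0 := by
    intro y₁ y₂ hy
    refine le_antisymm ?_ zero_le
    have key : ∀ n : ℕ, g (y₁, y₂) ≤ ENNReal.ofReal (Real.exp (-((n:ℝ)+1))) := by
      intro n
      have hε : (0:ℝ) < ((n:ℝ)+1)⁻¹ := by positivity
      rcases hy with h | h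
      · calc g (y₁, y₂) ≤ g (((n:ℝ)+1)⁻¹, max y₂ 1) :=
              hmono (h.trans hε.le) (le_max_left _ _)
          _ ≤ ENNReal.ofReal (Real.exp (-(min (((n:ℝ)+1)⁻¹) (max y₂ 1))⁻¹)) :=
              hexp _ _ hε (lt_of_lt_of_le one_pos (le_max_right _ _))
          _ ≤ ENNReal.ofReal (Real.exp (-((n:ℝ)+1))) := by
              apply ENNReal.ofReal_le_ofReal
              apply Real.exp_le_exp.mpr
              apply neg_le_neg
              have hminpos : (0:ℝ) < min (((n:ℝ)+1)⁻¹) (max y₂ 1) :=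
                lt_min hε (lt_of_lt_of_le one_pos (le_max_right _ _))
              calc ((n:ℝ)+1) = (((n:ℝ)+1)⁻¹)⁻¹ := (inv_inv _).symm
                _ ≤ (min (((n:ℝ)+1)⁻¹) (max y₂ 1))⁻¹ :=
                    inv_anti₀ hminpos (min_le_left _ _)
      · calc g (y₁, y₂) ≤ g (max y₁ 1, ((n:ℝ)+1)⁻¹) :=
              hmono (le_max_left _ _) (h.trans hε.le)
          _ ≤ ENNReal.ofReal (Real.exp (-(min (max y₁ 1) (((n:ℝ)+1)⁻¹))⁻¹)) :=
              hexp _ _ (lt_of_lt_of_le one_pos (le_max_right _ _)) hε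
          _ ≤ ENNReal.ofReal (Real.exp (-((n:ℝ)+1))) := by
              apply ENNReal.ofReal_le_ofReal
              apply Real.exp_le_exp.mpr
              apply neg_le_neg
              have hminpos : (0:ℝ) < min (max y₁ 1) (((n:ℝ)+1)⁻¹) :=
                lt_min (lt_of_lt_of_le one_pos (le_max_right _ _)) hε
              calc ((n:ℝ)+1) = (((n:ℝ)+1)⁻¹)⁻¹ := (inv_inv _).symm
                _ ≤ (min (max y₁ 1) (((n:ℝ)+1)⁻¹))⁻¹ :=
                    inv_anti₀ hminpos (min_le_right _ _)
    have htend : Tendsto (fun n : ℕ => ENNReal.ofReal (Real.exp (-((n:ℝ)+1)))) atTop (𝓝 0) := by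
      have hr : Tendsto (fun n : ℕ => Real.exp (-((n:ℝ)+1))) atTop (𝓝 0) := by
        apply Real.tendsto_exp_atBot.comp
        apply tendsto_neg_atTop_atBot.comp
        exact tendsto_natCast_atTop_atTop.atTop_add tendsto_const_nhds
      have := (ENNReal.continuous_ofReal.tendsto 0).comp hr
      simpa [Function.comp_def] using this
    exact ge_of_tendsto' htend key
  -- integrability and value of min
  have hmaxint : Integrable (fun w : ℝ × ℝ => max w.1 w.2) σ := by
    refine Integrable.mono' (hi1.abs.add hi2.abs)
      ((measurable_fst.max measurable_snd).aestronglyMeasurable) (ae_of_all _ fun w => ?_)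
    simp only [Real.norm_eq_abs, Pi.add_apply]
    have ha1 := abs_nonneg w.1
    have ha2 := abs_nonneg w.2
    have hb1 := le_abs_self w.1
    have hb2 := le_abs_self w.2
    rcases le_total w.1 w.2 with h | h
    · rw [max_eq_right h, abs_le]
      constructor <;> [skip; linarith]
      have := neg_abs_le w.2
      linarith
    · rw [max_eq_left h, abs_le]
      constructor <;> [skip; linarith]
      have := neg_abs_le w.1
      linarith
  have hminrw : (fun w : ℝ × ℝ => min w.1 w.2) = fun w : ℝ × ℝ => w.1 + w.2 - max w.1 w.2 := by
    funext w
    have := min_add_max w.1 w.2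
    linarith
  have hminint : Integrable (fun w : ℝ × ℝ => min w.1 w.2) σ := by
    rw [hminrw]; exact (hi1.add hi2).sub hmaxint
  have hminval : ∫ w, min w.1 w.2 ∂σ = 2 - θ := by
    rw [hminrw]
    have e1 : ∫ w, (w.1 + w.2 - max w.1 w.2 : ℝ) ∂σ
        = (∫ w, (w.1 + w.2 : ℝ) ∂σ) - ∫ w, max w.1 w.2 ∂σ :=
      integral_sub (hi1.add hi2) hmaxint
    rw [e1, integral_add hi1 hi2, h1, h2, hθ]
    norm_num
  have h2θ : 0 ≤ 2 - θ := by
    rw [← hminval]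
    exact integral_nonneg_of_ae (hnn.mono fun w hw => le_min hw.1 hw.2)
  -- the measure μ12 as a pushforward
  set κ : Measure ℝ :=
    (volume.restrict (Set.Ioi (0:ℝ))).withDensity (fun r => ENNReal.ofReal ((r ^ 2)⁻¹)) with hκdef
  have hdens : Measurable (fun r : ℝ => ENNReal.ofReal ((r ^ 2)⁻¹)) := by fun_prop
  have hκ : ∀ f : ℝ → ℝ≥0∞, Measurable f →
      ∫⁻ r, f r ∂κ = ∫⁻ r in Set.Ioi (0:ℝ), f r * ENNReal.ofReal ((r ^ 2)⁻¹) ∂volume := by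
    intro f hf
    rw [hκdef, lintegral_withDensity_eq_lintegral_mul _ hdens hf]
    exact lintegral_congr fun r => mul_comm _ _
  set T : (ℝ × ℝ) × ℝ → ℝ × ℝ := fun p => (p.2 * p.1.1, p.2 * p.1.2) with hTdef
  have hT : Measurable T := by fun_prop
  have hmap : μ12 = Measure.map T (σ.prod κ) := by
    ext A hA
    rw [Measure.map_apply hT hA, Measure.prod_apply (hT hA), hμ A hA]
    refine lintegral_congr fun w => ?_
    have hpre : MeasurableSet (Prod.mk w ⁻¹' (T ⁻¹' A)) :=
      measurable_prodMk_left (hT hA)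
    rw [← lintegral_indicator_one hpre, hκ _ ((measurable_one.indicator hpre))]
    refine lintegral_congr fun r => ?_
    congr 1
  -- inner bound
  have hinnerb : ∀ w : ℝ × ℝ, 0 ≤ w.1 → 0 ≤ w.2 →
      ∫⁻ r in Set.Ioi (0:ℝ), g (r * w.1, r * w.2) * ENNReal.ofReal ((r ^ 2)⁻¹) ∂volume
        ≤ ENNReal.ofReal (min w.1 w.2) := by
    intro w hw1 hw2
    by_cases hw : 0 < w.1 ∧ 0 < w.2
    · obtain ⟨hwa, hwb⟩ := hw
      have hptw : ∀ᵐ r ∂(volume.restrict (Set.Ioi (0:ℝ))),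
          g (r * w.1, r * w.2) * ENNReal.ofReal ((r ^ 2)⁻¹)
            ≤ ENNReal.ofReal (Real.exp (-(r * min w.1 w.2)⁻¹) * (r ^ 2)⁻¹) := by
        rw [MeasureTheory.ae_restrict_iff' measurableSet_Ioi]
        refine ae_of_all _ fun r hr => ?_
        have hr0 : (0:ℝ) < r := mem_Ioi.mp hr
        have hgle := hexp (r * w.1) (r * w.2) (mul_pos hr0 hwa) (mul_pos hr0 hwb)
        have hminmul : min (r * w.1) (r * w.2) = r * min w.1 w.2 :=
          (mul_min_of_nonneg _ _ hr0.le).symm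
        rw [hminmul] at hgle
        calc g (r * w.1, r * w.2) * ENNReal.ofReal ((r ^ 2)⁻¹)
            ≤ ENNReal.ofReal (Real.exp (-(r * min w.1 w.2)⁻¹)) * ENNReal.ofReal ((r ^ 2)⁻¹) :=
              mul_le_mul_left hgle _
          _ = ENNReal.ofReal (Real.exp (-(r * min w.1 w.2)⁻¹) * (r ^ 2)⁻¹) :=
              (ENNReal.ofReal_mul (Real.exp_nonneg _)).symm
      calc ∫⁻ r in Set.Ioi (0:ℝ), g (r * w.1, r * w.2) * ENNReal.ofReal ((r ^ 2)⁻¹) ∂volume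
          ≤ ∫⁻ r in Set.Ioi (0:ℝ),
              ENNReal.ofReal (Real.exp (-(r * min w.1 w.2)⁻¹) * (r ^ 2)⁻¹) ∂volume :=
            lintegral_mono_ae hptw
        _ = ENNReal.ofReal (min w.1 w.2) := aux2 _ (lt_min hwa hwb)
    · have hor : w.1 = 0 ∨ w.2 = 0 := by
        rcases not_and_or.mp hw with h | h
        · exact Or.inl (le_antisymm (not_lt.mp h) hw1)
        · exact Or.inr (le_antisymm (not_lt.mp h) hw2)
      have hzg : ∀ r ∈ Set.Ioi (0:ℝ),
          g (r * w.1, r * w.2) * ENNReal.ofReal ((r ^ 2)⁻¹) = 0 := by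
        intro r _
        have : g (r * w.1, r * w.2) = 0 := by
          apply hzero
          rcases hor with h | h
          · exact Or.inl (by rw [h, mul_zero])
          · exact Or.inr (by rw [h, mul_zero])
        rw [this, zero_mul]
      rw [setLIntegral_congr_fun measurableSet_Ioi hzg]
      simp
  -- main chain
  have hκmeas : ∀ w : ℝ × ℝ, Measurable fun r : ℝ => g (r * w.1, r * w.2) := by
    intro w
    exact hgmeas.comp (by fun_prop)
  calc ∫⁻ y, g y ∂μ12
      = ∫⁻ p, g (T p) ∂(σ.prod κ) := by rw [hmap, lintegral_map hgmeas hT]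
    _ = ∫⁻ w, ∫⁻ r, g (r * w.1, r * w.2) ∂κ ∂σ :=
        lintegral_prod _ ((hgmeas.comp hT).aemeasurable)
    _ = ∫⁻ w, ∫⁻ r in Set.Ioi (0:ℝ),
          g (r * w.1, r * w.2) * ENNReal.ofReal ((r ^ 2)⁻¹) ∂volume ∂σ :=
        lintegral_congr fun w => hκ _ (hκmeas w)
    _ ≤ ∫⁻ w, ENNReal.ofReal (min w.1 w.2) ∂σ :=
        lintegral_mono_ae (hnn.mono fun w hw => hinnerb w hw.1 hw.2)
    _ = ENNReal.ofReal (∫ w, min w.1 w.2 ∂σ) :=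
        (ofReal_integral_eq_lintegral_ofReal hminint
          (hnn.mono fun w hw => le_min hw.1 hw.2)).symm
    _ = ENNReal.ofReal (2 - θ) := by rw [hminval]
    _ ≤ ENNReal.ofReal (2 * (2 - θ)) := ENNReal.ofReal_le_ofReal (by linarith)
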